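/- Suppose λ : ℝ → ℝ and μ : [0,∞) → ℝ satisfy |λ(r)r − λ(s)s| ≤ Λ|r − s|^β for all r,s ∈ ℝ and |μ(|R|)R − μ(|S|)S| ≤ Λ|R − S|^β for all symmetric d×d matrices R, S, with Λ > 0 and β ∈ (0,1]. Then for every integer n ≥ 1 and all symmetric d×d matrices S, T with |S|, |T| ≤ K for some K ≥ 1, the map Aₙ(S) := λ(tr S)tr S·I + μ(|S^d|)S^d + (1/n)·tr(S)I/|tr S|^{1−1/n} + (1/n)·S^d/|S^d|^{1−1/n} satisfies |Aₙ(S) − Aₙ(T)| ≤ C·|S − T|^{min(β, 1/n)} for a constant C depending only on d, Λ, β, n and K. -/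

import Mathlib

/-- The Frobenius norm of a real matrix. -/
noncomputable def fnorm {d : ℕ} (A : Matrix (Fin d) (Fin d) ℝ) : ℝ :=
  Real.sqrt (∑ i, ∑ j, (A i j) ^ 2)

/-- The deviatoric part `S^d = S − (tr S / d) • I` of a matrix. -/
noncomputable def dev {d : ℕ} (S : Matrix (Fin d) (Fin d) ℝ) : Matrix (Fin d) (Fin d) ℝ :=
  S - (S.trace / (d : ℝ)) • (1 : Matrix (Fin d) (Fin d) ℝ)

/-- The regularized constitutive map
`Aₙ(S) = λ(tr S)tr S·I + μ(|S^d|)S^d + (1/n)·tr(S)I/|tr S|^{1−1/n} + (1/n)·S^d/|S^d|^{1−1/n}`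
(with the convention `0/|0|^{1−1/n} = 0`, which holds with the `rpow`/division-by-zero
conventions used here). -/
noncomputable def Amap {d : ℕ} (n : ℕ) (l μ : ℝ → ℝ) (S : Matrix (Fin d) (Fin d) ℝ) :
    Matrix (Fin d) (Fin d) ℝ :=
  (l S.trace * S.trace) • (1 : Matrix (Fin d) (Fin d) ℝ) + μ (fnorm (dev S)) • dev S +
    ((1 / n : ℝ) * (S.trace / |S.trace| ^ ((1 : ℝ) - 1 / n))) •
      (1 : Matrix (Fin d) (Fin d) ℝ) +
    ((1 / n : ℝ) / (fnorm (dev S)) ^ ((1 : ℝ) - 1 / n)) • dev S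

open Real

noncomputable def toE {d : ℕ} (A : Matrix (Fin d) (Fin d) ℝ) :
    EuclideanSpace ℝ (Fin d × Fin d) :=
  (WithLp.equiv 2 _).symm (fun p => A p.1 p.2)

lemma fnorm_eq {d : ℕ} (A : Matrix (Fin d) (Fin d) ℝ) : fnorm A = ‖toE A‖ := by
  rw [EuclideanSpace.norm_eq]
  unfold fnorm
  congr 1
  rw [Fintype.sum_prod_type]
  simp [toE, Real.norm_eq_abs, sq_abs]

lemma toE_sub {d : ℕ} (A B : Matrix (Fin d) (Fin d) ℝ) : toE (A - B) = toE A - toE B := rfl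

lemma toE_add {d : ℕ} (A B : Matrix (Fin d) (Fin d) ℝ) : toE (A + B) = toE A + toE B := rfl

lemma toE_smul {d : ℕ} (c : ℝ) (A : Matrix (Fin d) (Fin d) ℝ) : toE (c • A) = c • toE A := rfl

lemma toE_eq_zero {d : ℕ} {A : Matrix (Fin d) (Fin d) ℝ} (h : toE A = 0) : A = 0 := by
  ext i j
  have := congrArg (fun v : EuclideanSpace ℝ (Fin d × Fin d) => v (i, j)) h
  simpa [toE] using this

lemma fnorm_smul {d : ℕ} (c : ℝ) (A : Matrix (Fin d) (Fin d) ℝ) :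
    fnorm (c • A) = |c| * fnorm A := by
  rw [fnorm_eq, toE_smul, norm_smul, Real.norm_eq_abs, fnorm_eq]

lemma fnorm_nonneg {d : ℕ} (A : Matrix (Fin d) (Fin d) ℝ) : 0 ≤ fnorm A :=
  Real.sqrt_nonneg _

lemma fnorm_add_le {d : ℕ} (A B : Matrix (Fin d) (Fin d) ℝ) :
    fnorm (A + B) ≤ fnorm A + fnorm B := by
  rw [fnorm_eq, fnorm_eq, fnorm_eq, toE_add]; exact norm_add_le _ _

lemma fnorm_one {d : ℕ} : fnorm (1 : Matrix (Fin d) (Fin d) ℝ) = Real.sqrt d := by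
  unfold fnorm
  congr 1
  have : ∀ i : Fin d, ∑ j, ((1 : Matrix (Fin d) (Fin d) ℝ) i j) ^ 2 = 1 := by
    intro i
    rw [Finset.sum_eq_single i]
    · simp
    · intro b _ hb
      simp [Matrix.one_apply, (Ne.symm hb : ¬ i = b)]
    · simp
  simp [this]

lemma abs_trace_le {d : ℕ} (A : Matrix (Fin d) (Fin d) ℝ) :
    |A.trace| ≤ Real.sqrt d * fnorm A := by
  have h1 : |A.trace| ^ 2 ≤ (d : ℝ) * ∑ i, (A i i) ^ 2 := by
    have := sq_sum_le_card_mul_sum_sq (s := (Finset.univ : Finset (Fin d)))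
      (f := fun i => A i i)
    simpa [Matrix.trace, Matrix.diag, sq_abs] using this
  have h2 : ∑ i, (A i i) ^ 2 ≤ ∑ i, ∑ j, (A i j) ^ 2 := by
    apply Finset.sum_le_sum
    intro i _
    exact Finset.single_le_sum (fun j _ => sq_nonneg (A i j)) (Finset.mem_univ i)
  have h3 : |A.trace| ^ 2 ≤ (Real.sqrt d * fnorm A) ^ 2 := by
    have : (Real.sqrt d * fnorm A) ^ 2 = (d : ℝ) * ∑ i, ∑ j, (A i j) ^ 2 := by
      rw [mul_pow, Real.sq_sqrt (Nat.cast_nonneg d), fnorm, Real.sq_sqrt]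
      exact Finset.sum_nonneg fun i _ => Finset.sum_nonneg fun j _ => sq_nonneg _
    rw [this]
    calc |A.trace| ^ 2 ≤ (d : ℝ) * ∑ i, (A i i) ^ 2 := h1
      _ ≤ (d : ℝ) * ∑ i, ∑ j, (A i j) ^ 2 := by
          exact mul_le_mul_of_nonneg_left h2 (Nat.cast_nonneg d)
  calc |A.trace| = Real.sqrt (|A.trace| ^ 2) := by rw [Real.sqrt_sq (abs_nonneg _)]
    _ ≤ Real.sqrt ((Real.sqrt d * fnorm A) ^ 2) := Real.sqrt_le_sqrt h3
    _ = Real.sqrt d * fnorm A := Real.sqrt_sq (mul_nonneg (Real.sqrt_nonneg _) (fnorm_nonneg _))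

lemma rpow_sub_one_mul {α : ℝ} (hα : 0 < α) {a : ℝ} (ha : 0 ≤ a) :
    a ^ (α - 1) * a = a ^ α := by
  rcases eq_or_lt_of_le ha with h | h
  · rw [← h, Real.zero_rpow hα.ne', mul_zero]
  · have h2 := Real.rpow_add h (α - 1) 1
    rw [sub_add_cancel, Real.rpow_one] at h2
    exact h2.symm

lemma holder_key {E : Type*} [NormedAddCommGroup E] [NormedSpace ℝ E]
    {α : ℝ} (hα0 : 0 < α) (hα1 : α ≤ 1) (x y : E) :
    ‖(‖x‖ ^ (α - 1)) • x - (‖y‖ ^ (α - 1)) • y‖ ≤ 4 * ‖x - y‖ ^ α := by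
  wlog h : ‖y‖ ≤ ‖x‖ with H
  · have := H hα0 hα1 y x (le_of_not_ge h)
    rw [norm_sub_rev, norm_sub_rev y x] at this
    exact this
  set a := ‖x‖ with ha
  set b := ‖y‖ with hb
  set e := ‖x - y‖ with he
  have ha0 : 0 ≤ a := norm_nonneg _
  have hb0 : 0 ≤ b := norm_nonneg _
  have he0 : 0 ≤ e := norm_nonneg _
  have habe : a - b ≤ e := norm_sub_norm_le x y
  rcases eq_or_lt_of_le he0 with hez | hez
  · -- e = 0, so x = y
    have hxy : x = y := by
      have h0 : ‖x - y‖ = 0 := hez.symm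
      exact sub_eq_zero.mp (norm_eq_zero.mp h0)
    subst hxy
    simp [← he, ← hez, Real.zero_rpow hα0.ne']
    rw [ha, hb, sub_self]
  by_cases hcase : a ≤ 2 * e
  · -- case 1
    have h1 : ‖(‖x‖ ^ (α - 1)) • x‖ = a ^ α := by
      rw [norm_smul, Real.norm_eq_abs, abs_of_nonneg (Real.rpow_nonneg ha0 _)]
      exact rpow_sub_one_mul hα0 ha0
    have h2 : ‖(‖y‖ ^ (α - 1)) • y‖ = b ^ α := by
      rw [norm_smul, Real.norm_eq_abs, abs_of_nonneg (Real.rpow_nonneg hb0 _)]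
      exact rpow_sub_one_mul hα0 hb0
    have h3 : b ^ α ≤ a ^ α := Real.rpow_le_rpow hb0 h hα0.le
    have h4 : a ^ α ≤ (2 * e) ^ α := Real.rpow_le_rpow ha0 hcase hα0.le
    have h5 : (2 * e) ^ α = 2 ^ α * e ^ α := Real.mul_rpow (by norm_num) he0
    have h6 : (2 : ℝ) ^ α ≤ 2 := by
      calc (2 : ℝ) ^ α ≤ 2 ^ (1 : ℝ) :=
        Real.rpow_le_rpow_of_exponent_le one_le_two hα1
      _ = 2 := Real.rpow_one 2
    have h7 : 0 ≤ e ^ α := Real.rpow_nonneg he0 _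
    calc ‖(‖x‖ ^ (α - 1)) • x - (‖y‖ ^ (α - 1)) • y‖
        ≤ ‖(‖x‖ ^ (α - 1)) • x‖ + ‖(‖y‖ ^ (α - 1)) • y‖ := norm_sub_le _ _
      _ = a ^ α + b ^ α := by rw [h1, h2]
      _ ≤ (2 * e) ^ α + (2 * e) ^ α := by linarith
      _ = 2 ^ α * e ^ α + 2 ^ α * e ^ α := by rw [h5]
      _ ≤ 4 * e ^ α := by nlinarith
  · -- case 2 : 2e < a
    push_neg at hcase
    have hea : e ≤ a := by linarith
    have hb' : 0 < b := by linarith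
    have heb : e ≤ b := by linarith
    -- antitone facts
    have hAe : a ^ (α - 1) ≤ e ^ (α - 1) :=
      Real.rpow_le_rpow_of_nonpos hez hea (by linarith)
    have hAB : a ^ (α - 1) ≤ b ^ (α - 1) :=
      Real.rpow_le_rpow_of_nonpos hb' h (by linarith)
    have hBe : b ^ (α - 1) ≤ e ^ (α - 1) :=
      Real.rpow_le_rpow_of_nonpos hez heb (by linarith)
    have decomp : (‖x‖ ^ (α - 1)) • x - (‖y‖ ^ (α - 1)) • y
        = (a ^ (α - 1)) • (x - y) + (a ^ (α - 1) - b ^ (α - 1)) • y := by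
      rw [smul_sub, sub_smul]; abel
    have step1 : ‖(a ^ (α - 1)) • (x - y)‖ ≤ e ^ α := by
      rw [norm_smul, Real.norm_eq_abs, abs_of_nonneg (Real.rpow_nonneg ha0 _), ← he]
      calc a ^ (α - 1) * e ≤ e ^ (α - 1) * e :=
        mul_le_mul_of_nonneg_right hAe he0
      _ = e ^ α := rpow_sub_one_mul hα0 he0
    have step2 : ‖(a ^ (α - 1) - b ^ (α - 1)) • y‖ ≤ e ^ α := by
      rw [norm_smul, Real.norm_eq_abs, ← hb, abs_of_nonpos (by linarith)]
      have key : (b ^ (α - 1) - a ^ (α - 1)) * b ≤ a ^ (α - 1) * (a - b) := by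
        have e1 : b ^ (α - 1) * b = b ^ α := rpow_sub_one_mul hα0 hb0
        have e2 : a ^ (α - 1) * a = a ^ α := rpow_sub_one_mul hα0 ha0
        have e3 : b ^ α ≤ a ^ α := Real.rpow_le_rpow hb0 h hα0.le
        nlinarith
      calc -(a ^ (α - 1) - b ^ (α - 1)) * b = (b ^ (α - 1) - a ^ (α - 1)) * b := by ring
        _ ≤ a ^ (α - 1) * (a - b) := key
        _ ≤ e ^ (α - 1) * e := by
            apply mul_le_mul hAe habe (by linarith) (Real.rpow_nonneg he0 _)
        _ = e ^ α := rpow_sub_one_mul hα0 he0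
    have h7 : 0 ≤ e ^ α := Real.rpow_nonneg he0 _
    calc ‖(‖x‖ ^ (α - 1)) • x - (‖y‖ ^ (α - 1)) • y‖
        = ‖(a ^ (α - 1)) • (x - y) + (a ^ (α - 1) - b ^ (α - 1)) • y‖ := by rw [decomp]
      _ ≤ ‖(a ^ (α - 1)) • (x - y)‖ + ‖(a ^ (α - 1) - b ^ (α - 1)) • y‖ := norm_add_le _ _
      _ ≤ e ^ α + e ^ α := add_le_add step1 step2
      _ ≤ 4 * e ^ α := by linarith

lemma dev_sub {d : ℕ} (S T : Matrix (Fin d) (Fin d) ℝ) :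
    dev S - dev T = dev (S - T) := by
  unfold dev
  rw [Matrix.trace_sub, sub_div, sub_smul]
  abel

lemma dev_symm {d : ℕ} {S : Matrix (Fin d) (Fin d) ℝ} (h : S.IsSymm) : (dev S).IsSymm := by
  unfold Matrix.IsSymm dev
  rw [Matrix.transpose_sub, Matrix.transpose_smul, Matrix.transpose_one, h]

lemma fnorm_dev_le {d : ℕ} (hd : 1 ≤ d) (X : Matrix (Fin d) (Fin d) ℝ) :
    fnorm (dev X) ≤ 2 * fnorm X := by
  have hd0 : (0 : ℝ) < d := by exact_mod_cast Nat.lt_of_lt_of_le Nat.zero_lt_one hd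
  have h1 : fnorm (dev X) ≤ fnorm X + fnorm ((X.trace / (d : ℝ)) • (1 : Matrix (Fin d) (Fin d) ℝ)) := by
    unfold dev
    rw [sub_eq_add_neg]
    refine (fnorm_add_le _ _).trans ?_
    have : fnorm (-((X.trace / (d : ℝ)) • (1 : Matrix (Fin d) (Fin d) ℝ)))
        = fnorm ((X.trace / (d : ℝ)) • (1 : Matrix (Fin d) (Fin d) ℝ)) := by
      rw [show -((X.trace / (d : ℝ)) • (1 : Matrix (Fin d) (Fin d) ℝ))
          = (-1 : ℝ) • ((X.trace / (d : ℝ)) • (1 : Matrix (Fin d) (Fin d) ℝ)) by simp,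
        fnorm_smul]
      simp
    rw [this]
  have h2 : fnorm ((X.trace / (d : ℝ)) • (1 : Matrix (Fin d) (Fin d) ℝ))
      = |X.trace| / d * Real.sqrt d := by
    rw [fnorm_smul, fnorm_one, abs_div, abs_of_pos hd0]
  have h3 : |X.trace| ≤ Real.sqrt d * fnorm X := abs_trace_le X
  have h4 : Real.sqrt d * Real.sqrt d = (d : ℝ) := Real.mul_self_sqrt (le_of_lt hd0)
  have h5 : |X.trace| / d * Real.sqrt d ≤ fnorm X := by
    rw [div_mul_eq_mul_div, div_le_iff₀ hd0]
    calc |X.trace| * Real.sqrt d ≤ (Real.sqrt d * fnorm X) * Real.sqrt d :=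
      mul_le_mul_of_nonneg_right h3 (Real.sqrt_nonneg _)
    _ = (Real.sqrt d * Real.sqrt d) * fnorm X := by ring
    _ = fnorm X * (d : ℝ) := by rw [h4]; ring
  linarith [h1, h2 ▸ h1]

lemma scalar_div_eq {α : ℝ} (t : ℝ) :
    t / |t| ^ ((1 : ℝ) - α) = |t| ^ (α - 1) * t := by
  rcases eq_or_ne t 0 with rfl | ht
  · simp
  · have h : (0 : ℝ) < |t| := abs_pos.mpr ht
    rw [show α - 1 = -(1 - α) by ring, Real.rpow_neg (abs_nonneg t), div_eq_mul_inv, mul_comm]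

lemma matrix_div_smul_eq {d : ℕ} {α : ℝ} (c : ℝ) (X : Matrix (Fin d) (Fin d) ℝ) :
    (c / fnorm X ^ ((1 : ℝ) - α)) • X = (c * fnorm X ^ (α - 1)) • X := by
  rcases eq_or_ne X 0 with rfl | hX
  · simp
  · have h : 0 < fnorm X := by
      rcases lt_or_eq_of_le (fnorm_nonneg X) with h | h
      · exact h
      · exfalso; apply hX
        apply toE_eq_zero
        apply norm_eq_zero.mp
        rw [← fnorm_eq]
        exact h.symm
    congr 1
    rw [show α - 1 = -(1 - α) by ring, Real.rpow_neg (le_of_lt h), div_eq_mul_inv]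

lemma fnorm_sub_le {d : ℕ} (A B : Matrix (Fin d) (Fin d) ℝ) :
    fnorm (A - B) ≤ fnorm A + fnorm B := by
  rw [fnorm_eq, fnorm_eq, fnorm_eq, toE_sub]; exact norm_sub_le _ _

lemma scalar_holder {α : ℝ} (hα0 : 0 < α) (hα1 : α ≤ 1) (x y : ℝ) :
    |(|x| ^ (α - 1) * x) - (|y| ^ (α - 1) * y)| ≤ 4 * |x - y| ^ α := by
  have := holder_key (E := ℝ) hα0 hα1 x y
  simpa [Real.norm_eq_abs, smul_eq_mul] using this

lemma matrix_holder {d : ℕ} {α : ℝ} (hα0 : 0 < α) (hα1 : α ≤ 1)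
    (X Y : Matrix (Fin d) (Fin d) ℝ) :
    fnorm ((fnorm X ^ (α - 1)) • X - (fnorm Y ^ (α - 1)) • Y) ≤ 4 * fnorm (X - Y) ^ α := by
  have h := holder_key hα0 hα1 (toE X) (toE Y)
  rw [← fnorm_eq, ← fnorm_eq, ← toE_smul, ← toE_smul, ← toE_sub, ← fnorm_eq,
    ← toE_sub, ← fnorm_eq] at h
  exact h

lemma epow {e M γ p : ℝ} (he0 : 0 ≤ e) (heM : e ≤ M) (hγ : 0 < γ) (hγp : γ ≤ p) :
    e ^ p ≤ M ^ (p - γ) * e ^ γ := by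
  rcases eq_or_lt_of_le he0 with h | h
  · rw [← h, Real.zero_rpow (by linarith : p ≠ 0), Real.zero_rpow hγ.ne', mul_zero]
  · have : e ^ p = e ^ (p - γ) * e ^ γ := by
      rw [← Real.rpow_add h, sub_add_cancel]
    rw [this]
    exact mul_le_mul_of_nonneg_right
      (Real.rpow_le_rpow he0 heM (by linarith)) (Real.rpow_nonneg he0 _)


/-- Hölder continuity of `s ↦ λ(s)s` and `S ↦ μ(|S|)S` implies a Hölder bound, with
exponent `min(β, 1/n)`, for the regularized map `Aₙ` on the ball `{|S| ≤ K}`, with a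
constant depending only on `d`, `Λ`, `β`, `n` and `K`. -/
theorem stmt_17 (d n : ℕ) (hd : 1 ≤ d) (hn : 1 ≤ n) (β Λ K : ℝ)
    (hβ0 : 0 < β) (hβ1 : β ≤ 1) (hΛ : 0 < Λ) (hK : 1 ≤ K)
    (l μ : ℝ → ℝ)
    (hl : ∀ r s : ℝ, |l r * r - l s * s| ≤ Λ * |r - s| ^ β)
    (hμ : ∀ R S : Matrix (Fin d) (Fin d) ℝ, R.IsSymm → S.IsSymm →
      fnorm (μ (fnorm R) • R - μ (fnorm S) • S) ≤ Λ * fnorm (R - S) ^ β) :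
    ∃ C : ℝ, 0 < C ∧
      ∀ S T : Matrix (Fin d) (Fin d) ℝ, S.IsSymm → T.IsSymm →
        fnorm S ≤ K → fnorm T ≤ K →
        fnorm (Amap n l μ S - Amap n l μ T) ≤
          C * fnorm (S - T) ^ min β ((1 : ℝ) / n) := by
  have hn0 : (0 : ℝ) < n := by exact_mod_cast Nat.lt_of_lt_of_le Nat.zero_lt_one hn
  have hd0 : (0 : ℝ) < d := by exact_mod_cast Nat.lt_of_lt_of_le Nat.zero_lt_one hd
  set α : ℝ := 1 / n with hα
  have hα0 : 0 < α := by rw [hα]; exact div_pos one_pos hn0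
  have hα1 : α ≤ 1 := by
    rw [hα, div_le_one hn0]
    exact_mod_cast hn
  have h1n : (0 : ℝ) < 1 / n := div_pos one_pos hn0
  set γ : ℝ := min β α with hγ
  have hγ0 : 0 < γ := lt_min hβ0 hα0
  have hγβ : γ ≤ β := min_le_left _ _
  have hγα : γ ≤ α := min_le_right _ _
  set M : ℝ := 2 * K with hM
  have hM0 : (0 : ℝ) < M := by rw [hM]; linarith
  have hsd1 : (1 : ℝ) ≤ Real.sqrt d := by
    rw [show (1 : ℝ) = Real.sqrt 1 by simp]
    exact Real.sqrt_le_sqrt (by exact_mod_cast hd)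
  have hsd0 : (0 : ℝ) < Real.sqrt d := by linarith
  have hsdsq : Real.sqrt d * Real.sqrt d = (d : ℝ) := Real.mul_self_sqrt hd0.le
  have hP1 : 0 < M ^ (β - γ) := Real.rpow_pos_of_pos hM0 _
  have hP2 : 0 < M ^ (α - γ) := Real.rpow_pos_of_pos hM0 _
  have hCpos : 0 < Λ * d * M ^ (β - γ) + 2 * Λ * M ^ (β - γ)
      + 4 * d * α * M ^ (α - γ) + 8 * α * M ^ (α - γ) := by
    have c1 : 0 < Λ * d * M ^ (β - γ) := mul_pos (mul_pos hΛ hd0) hP1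
    have c2 : 0 < 2 * Λ * M ^ (β - γ) := mul_pos (mul_pos two_pos hΛ) hP1
    have c3 : 0 < 4 * d * α * M ^ (α - γ) :=
      mul_pos (mul_pos (mul_pos (by norm_num) hd0) hα0) hP2
    have c4 : 0 < 8 * α * M ^ (α - γ) := mul_pos (mul_pos (by norm_num) hα0) hP2
    linarith
  refine ⟨Λ * d * M ^ (β - γ) + 2 * Λ * M ^ (β - γ)
      + 4 * d * α * M ^ (α - γ) + 8 * α * M ^ (α - γ), hCpos, ?_⟩
  intro S T hS hT hSK hTK
  set e : ℝ := fnorm (S - T) with he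
  have he0 : 0 ≤ e := fnorm_nonneg _
  have heM : e ≤ M := by
    calc e ≤ fnorm S + fnorm T := fnorm_sub_le S T
    _ ≤ M := by rw [hM]; linarith
  have heβ0 : 0 ≤ e ^ β := Real.rpow_nonneg he0 _
  have heα0 : 0 ≤ e ^ α := Real.rpow_nonneg he0 _
  have hsdβ : Real.sqrt d ^ β ≤ Real.sqrt d := by
    calc Real.sqrt d ^ β ≤ Real.sqrt d ^ (1 : ℝ) :=
      Real.rpow_le_rpow_of_exponent_le hsd1 hβ1
    _ = Real.sqrt d := Real.rpow_one _
  have hsdα : Real.sqrt d ^ α ≤ Real.sqrt d := by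
    calc Real.sqrt d ^ α ≤ Real.sqrt d ^ (1 : ℝ) :=
      Real.rpow_le_rpow_of_exponent_le hsd1 hα1
    _ = Real.sqrt d := Real.rpow_one _
  have htr : |S.trace - T.trace| ≤ Real.sqrt d * e := by
    rw [← Matrix.trace_sub]
    exact abs_trace_le (S - T)
  have hdev : fnorm (dev S - dev T) ≤ 2 * e := by
    rw [dev_sub]
    exact fnorm_dev_le hd (S - T)
  have heβ : e ^ β ≤ M ^ (β - γ) * e ^ γ := epow he0 heM hγ0 hγβ
  have heα : e ^ α ≤ M ^ (α - γ) * e ^ γ := epow he0 heM hγ0 hγα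
  have heγ0 : 0 ≤ e ^ γ := Real.rpow_nonneg he0 _
  have decomp : Amap n l μ S - Amap n l μ T =
      ((l S.trace * S.trace - l T.trace * T.trace) • (1 : Matrix (Fin d) (Fin d) ℝ)
      + (μ (fnorm (dev S)) • dev S - μ (fnorm (dev T)) • dev T))
      + (((1 / n : ℝ) * (|S.trace| ^ (α - 1) * S.trace)
          - (1 / n : ℝ) * (|T.trace| ^ (α - 1) * T.trace)) • (1 : Matrix (Fin d) (Fin d) ℝ))
      + (((1 / n : ℝ) * fnorm (dev S) ^ (α - 1)) • dev S
          - ((1 / n : ℝ) * fnorm (dev T) ^ (α - 1)) • dev T) := by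
    unfold Amap
    rw [scalar_div_eq (α := α), scalar_div_eq (α := α),
      matrix_div_smul_eq (α := α), matrix_div_smul_eq (α := α)]
    rw [sub_smul, sub_smul]
    abel
  rw [decomp]
  have b1 : fnorm ((l S.trace * S.trace - l T.trace * T.trace) •
      (1 : Matrix (Fin d) (Fin d) ℝ)) ≤ Λ * d * M ^ (β - γ) * e ^ γ := by
    rw [fnorm_smul, fnorm_one]
    calc |l S.trace * S.trace - l T.trace * T.trace| * Real.sqrt d
        ≤ (Λ * |S.trace - T.trace| ^ β) * Real.sqrt d :=
          mul_le_mul_of_nonneg_right (hl _ _) hsd0.le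
      _ ≤ (Λ * (Real.sqrt d * e) ^ β) * Real.sqrt d := by
          refine mul_le_mul_of_nonneg_right (mul_le_mul_of_nonneg_left ?_ hΛ.le) hsd0.le
          exact Real.rpow_le_rpow (abs_nonneg _) htr hβ0.le
      _ = Λ * (Real.sqrt d ^ β * e ^ β) * Real.sqrt d := by
          rw [Real.mul_rpow hsd0.le he0]
      _ ≤ Λ * (Real.sqrt d * e ^ β) * Real.sqrt d := by
          refine mul_le_mul_of_nonneg_right (mul_le_mul_of_nonneg_left ?_ hΛ.le) hsd0.le
          exact mul_le_mul_of_nonneg_right hsdβ heβ0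
      _ = Λ * d * e ^ β := by linear_combination (Λ * e ^ β) * hsdsq
      _ ≤ Λ * d * (M ^ (β - γ) * e ^ γ) :=
          mul_le_mul_of_nonneg_left heβ (mul_nonneg hΛ.le hd0.le)
      _ = Λ * d * M ^ (β - γ) * e ^ γ := by ring
  have b2 : fnorm (μ (fnorm (dev S)) • dev S - μ (fnorm (dev T)) • dev T)
      ≤ 2 * Λ * M ^ (β - γ) * e ^ γ := by
    calc fnorm (μ (fnorm (dev S)) • dev S - μ (fnorm (dev T)) • dev T)
        ≤ Λ * fnorm (dev S - dev T) ^ β := hμ _ _ (dev_symm hS) (dev_symm hT)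
      _ ≤ Λ * (2 * e) ^ β :=
          mul_le_mul_of_nonneg_left
            (Real.rpow_le_rpow (fnorm_nonneg _) hdev hβ0.le) hΛ.le
      _ = Λ * (2 ^ β * e ^ β) := by rw [Real.mul_rpow (by norm_num) he0]
      _ ≤ Λ * (2 * e ^ β) := by
          have h2β : (2 : ℝ) ^ β ≤ 2 := by
            calc (2 : ℝ) ^ β ≤ 2 ^ (1 : ℝ) :=
              Real.rpow_le_rpow_of_exponent_le one_le_two hβ1
            _ = 2 := Real.rpow_one 2
          exact mul_le_mul_of_nonneg_left
            (mul_le_mul_of_nonneg_right h2β heβ0) hΛ.le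
      _ = 2 * Λ * e ^ β := by ring
      _ ≤ 2 * Λ * (M ^ (β - γ) * e ^ γ) :=
          mul_le_mul_of_nonneg_left heβ (by linarith)
      _ = 2 * Λ * M ^ (β - γ) * e ^ γ := by ring
  have b3 : fnorm (((1 / n : ℝ) * (|S.trace| ^ (α - 1) * S.trace)
      - (1 / n : ℝ) * (|T.trace| ^ (α - 1) * T.trace)) • (1 : Matrix (Fin d) (Fin d) ℝ))
      ≤ 4 * d * α * M ^ (α - γ) * e ^ γ := by
    rw [fnorm_smul, fnorm_one]
    have hfactor : (1 / n : ℝ) * (|S.trace| ^ (α - 1) * S.trace)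
        - (1 / n : ℝ) * (|T.trace| ^ (α - 1) * T.trace)
        = (1 / n : ℝ) * ((|S.trace| ^ (α - 1) * S.trace)
            - (|T.trace| ^ (α - 1) * T.trace)) := by ring
    rw [hfactor, abs_mul, abs_of_pos h1n]
    have hsc : |(|S.trace| ^ (α - 1) * S.trace) - (|T.trace| ^ (α - 1) * T.trace)|
        ≤ 4 * |S.trace - T.trace| ^ α := scalar_holder hα0 hα1 _ _
    calc (1 / n : ℝ) * |(|S.trace| ^ (α - 1) * S.trace) - (|T.trace| ^ (α - 1) * T.trace)|
          * Real.sqrt d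
        ≤ (1 / n : ℝ) * (4 * |S.trace - T.trace| ^ α) * Real.sqrt d :=
          mul_le_mul_of_nonneg_right (mul_le_mul_of_nonneg_left hsc h1n.le) hsd0.le
      _ ≤ (1 / n : ℝ) * (4 * (Real.sqrt d * e) ^ α) * Real.sqrt d := by
          refine mul_le_mul_of_nonneg_right (mul_le_mul_of_nonneg_left ?_ h1n.le) hsd0.le
          exact mul_le_mul_of_nonneg_left
            (Real.rpow_le_rpow (abs_nonneg _) htr hα0.le) (by norm_num)
      _ = (1 / n : ℝ) * (4 * (Real.sqrt d ^ α * e ^ α)) * Real.sqrt d := by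
          rw [Real.mul_rpow hsd0.le he0]
      _ ≤ (1 / n : ℝ) * (4 * (Real.sqrt d * e ^ α)) * Real.sqrt d := by
          refine mul_le_mul_of_nonneg_right (mul_le_mul_of_nonneg_left ?_ h1n.le) hsd0.le
          exact mul_le_mul_of_nonneg_left
            (mul_le_mul_of_nonneg_right hsdα heα0) (by norm_num)
      _ = 4 * d * α * e ^ α := by
          rw [hα]
          linear_combination (4 * (1 / (n:ℝ)) * e ^ ((1:ℝ) / (n:ℝ))) * hsdsq
      _ ≤ 4 * d * α * (M ^ (α - γ) * e ^ γ) :=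
          mul_le_mul_of_nonneg_left heα
            (mul_nonneg (mul_nonneg (by norm_num) hd0.le) hα0.le)
      _ = 4 * d * α * M ^ (α - γ) * e ^ γ := by ring
  have b4 : fnorm (((1 / n : ℝ) * fnorm (dev S) ^ (α - 1)) • dev S
      - ((1 / n : ℝ) * fnorm (dev T) ^ (α - 1)) • dev T)
      ≤ 8 * α * M ^ (α - γ) * e ^ γ := by
    have hre : ((1 / n : ℝ) * fnorm (dev S) ^ (α - 1)) • dev S
        - ((1 / n : ℝ) * fnorm (dev T) ^ (α - 1)) • dev T
        = (1 / n : ℝ) • ((fnorm (dev S) ^ (α - 1)) • dev S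
            - (fnorm (dev T) ^ (α - 1)) • dev T) := by
      rw [smul_sub, ← mul_smul, ← mul_smul]
    rw [hre, fnorm_smul, abs_of_pos h1n]
    calc (1 / n : ℝ) * fnorm ((fnorm (dev S) ^ (α - 1)) • dev S
          - (fnorm (dev T) ^ (α - 1)) • dev T)
        ≤ (1 / n : ℝ) * (4 * fnorm (dev S - dev T) ^ α) :=
          mul_le_mul_of_nonneg_left (matrix_holder hα0 hα1 _ _) h1n.le
      _ ≤ (1 / n : ℝ) * (4 * (2 * e) ^ α) := by
          refine mul_le_mul_of_nonneg_left ?_ h1n.le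
          exact mul_le_mul_of_nonneg_left
            (Real.rpow_le_rpow (fnorm_nonneg _) hdev hα0.le) (by norm_num)
      _ = (1 / n : ℝ) * (4 * (2 ^ α * e ^ α)) := by
          rw [Real.mul_rpow (by norm_num) he0]
      _ ≤ (1 / n : ℝ) * (4 * (2 * e ^ α)) := by
          have h2α : (2 : ℝ) ^ α ≤ 2 := by
            calc (2 : ℝ) ^ α ≤ 2 ^ (1 : ℝ) :=
              Real.rpow_le_rpow_of_exponent_le one_le_two hα1
            _ = 2 := Real.rpow_one 2
          refine mul_le_mul_of_nonneg_left ?_ h1n.le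
          exact mul_le_mul_of_nonneg_left
            (mul_le_mul_of_nonneg_right h2α heα0) (by norm_num)
      _ = 8 * α * e ^ α := by rw [hα]; ring
      _ ≤ 8 * α * (M ^ (α - γ) * e ^ γ) :=
          mul_le_mul_of_nonneg_left heα (mul_nonneg (by norm_num) hα0.le)
      _ = 8 * α * M ^ (α - γ) * e ^ γ := by ring
  have t2 := fnorm_add_le
    (((l S.trace * S.trace - l T.trace * T.trace) • (1 : Matrix (Fin d) (Fin d) ℝ)
      + (μ (fnorm (dev S)) • dev S - μ (fnorm (dev T)) • dev T)))
    (((1 / n : ℝ) * (|S.trace| ^ (α - 1) * S.trace)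
      - (1 / n : ℝ) * (|T.trace| ^ (α - 1) * T.trace)) • (1 : Matrix (Fin d) (Fin d) ℝ))
  have t3 := fnorm_add_le
    (((l S.trace * S.trace - l T.trace * T.trace) • (1 : Matrix (Fin d) (Fin d) ℝ)
      + (μ (fnorm (dev S)) • dev S - μ (fnorm (dev T)) • dev T))
      + (((1 / n : ℝ) * (|S.trace| ^ (α - 1) * S.trace)
        - (1 / n : ℝ) * (|T.trace| ^ (α - 1) * T.trace)) • (1 : Matrix (Fin d) (Fin d) ℝ)))
    (((1 / n : ℝ) * fnorm (dev S) ^ (α - 1)) • dev S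
      - ((1 / n : ℝ) * fnorm (dev T) ^ (α - 1)) • dev T)
  have t1 := fnorm_add_le
    ((l S.trace * S.trace - l T.trace * T.trace) • (1 : Matrix (Fin d) (Fin d) ℝ))
    (μ (fnorm (dev S)) • dev S - μ (fnorm (dev T)) • dev T)
  calc fnorm ((l S.trace * S.trace - l T.trace * T.trace) • (1 : Matrix (Fin d) (Fin d) ℝ)
      + (μ (fnorm (dev S)) • dev S - μ (fnorm (dev T)) • dev T)
      + (((1 / n : ℝ) * (|S.trace| ^ (α - 1) * S.trace)
          - (1 / n : ℝ) * (|T.trace| ^ (α - 1) * T.trace)) • (1 : Matrix (Fin d) (Fin d) ℝ))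
      + (((1 / n : ℝ) * fnorm (dev S) ^ (α - 1)) • dev S
          - ((1 / n : ℝ) * fnorm (dev T) ^ (α - 1)) • dev T))
      ≤ Λ * d * M ^ (β - γ) * e ^ γ + 2 * Λ * M ^ (β - γ) * e ^ γ
        + 4 * d * α * M ^ (α - γ) * e ^ γ + 8 * α * M ^ (α - γ) * e ^ γ := by linarith
    _ = (Λ * d * M ^ (β - γ) + 2 * Λ * M ^ (β - γ)
        + 4 * d * α * M ^ (α - γ) + 8 * α * M ^ (α - γ)) * e ^ γ := by ring
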